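/- arXiv:1512.01018 — 5 statements merged into one kernel-verified Lean document; each statement's English description precedes it below -/
import Mathlib

section
/- Let L be a finite-dimensional Lie algebra over a field F and let I be a perfect subideal of L (that is, I² = I). Then I is a characteristic ideal of L; in particular, I is an ideal of L. -/
namespace Paper

open LieAlgebra

section AlgDefs

variable (F : Type*) [Field F] (L : Type*) [LieRing L] [LieAlgebra F L]

/-- The nilradical of a Lie algebra: the largest nilpotent ideal (the sup of nilpotent ideals). -/
noncomputable def nilrad : LieIdeal F L :=
  sSup {I : LieIdeal F L | LieRing.IsNilpotent I}

/-- The nilpotency class of a Lie algebra. -/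
noncomputable def nilClass : ℕ := sInf {k | LieModule.lowerCentralSeries F L L k = ⊥}

/-- A Lie algebra is nilregular if the field has characteristic zero, or characteristic `p > 0`
and its nilradical has nilpotency class less than `p - 1`. -/
noncomputable def Nilregular : Prop :=
  ringChar F = 0 ∨ nilClass F (nilrad F L) < ringChar F - 1

/-- A Lie algebra is solregular if the field has characteristic zero, or characteristic `p > 0`
and its radical has derived length less than `log₂ p`. -/
noncomputable def Solregular : Prop :=
  ringChar F = 0 ∨ 2 ^ LieAlgebra.derivedLength F (LieAlgebra.radical F L) < ringChar F

/-- Regular means nilregular or solregular. -/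
noncomputable def Regular : Prop := Nilregular F L ∨ Solregular F L

end AlgDefs

section IdealDefs

variable {F : Type*} [Field F] {L : Type*} [LieRing L] [LieAlgebra F L]

/-- The centraliser `C_L(I)` of an ideal `I`, as an ideal of `L`. -/
def centralizer (I : LieIdeal F L) : LieIdeal F L where
  carrier := {x : L | ∀ y ∈ I, ⁅x, y⁆ = 0}
  zero_mem' := by intro y hy; simp
  add_mem' := by intro a b ha hb y hy; rw [add_lie, ha y hy, hb y hy, add_zero]
  smul_mem' := by intro c x hx y hy; rw [smul_lie, hx y hy, smul_zero]
  lie_mem := by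
    intro x m hm y hy
    have h1 : ⁅x, ⁅m, y⁆⁆ = (0 : L) := by rw [hm y hy, lie_zero]
    have h2 : ⁅m, ⁅x, y⁆⁆ = (0 : L) := hm _ (I.lie_mem hy)
    show ⁅⁅x, m⁆, y⁆ = (0 : L)
    rw [lie_lie, h1, h2, sub_zero]

/-- The centre `Z(I)` of an ideal `I`, as an ideal of `L`. -/
def idealCenter (I : LieIdeal F L) : LieIdeal F L where
  carrier := {x : L | x ∈ I ∧ ∀ y ∈ I, ⁅x, y⁆ = 0}
  zero_mem' := ⟨I.zero_mem, by intro y hy; simp⟩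
  add_mem' := by
    intro a b ha hb
    exact ⟨I.add_mem ha.1 hb.1, fun y hy => by rw [add_lie, ha.2 y hy, hb.2 y hy, add_zero]⟩
  smul_mem' := by
    intro c x hx
    exact ⟨I.smul_mem c hx.1, fun y hy => by rw [smul_lie, hx.2 y hy, smul_zero]⟩
  lie_mem := by
    intro x m hm
    refine ⟨I.lie_mem hm.1, fun y hy => ?_⟩
    have h1 : ⁅x, ⁅m, y⁆⁆ = (0 : L) := by rw [hm.2 y hy, lie_zero]
    have h2 : ⁅m, ⁅x, y⁆⁆ = (0 : L) := hm.2 _ (I.lie_mem hy)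
    show ⁅⁅x, m⁆, y⁆ = (0 : L)
    rw [lie_lie, h1, h2, sub_zero]

/-- The centraliser `C_L(A/B)` of a chief factor, as an ideal of `L`. -/
def chiefCentralizer (A B : LieIdeal F L) : LieIdeal F L where
  carrier := {x : L | ∀ a ∈ A, ⁅x, a⁆ ∈ B}
  zero_mem' := by intro a ha; simp [B.zero_mem]
  add_mem' := by intro x y hx hy a ha; rw [add_lie]; exact B.add_mem (hx a ha) (hy a ha)
  smul_mem' := by intro c x hx a ha; rw [smul_lie]; exact B.smul_mem c (hx a ha)
  lie_mem := by
    intro x m hm a ha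
    show ⁅⁅x, m⁆, a⁆ ∈ B
    rw [lie_lie]
    exact B.sub_mem (B.lie_mem (hm a ha)) (hm _ (A.lie_mem ha))

/-- `A/Z` is a minimal ideal of `L/Z` (via the ideal correspondence). -/
def IsMinModIdeal (Z A : LieIdeal F L) : Prop :=
  Z < A ∧ ∀ B : LieIdeal F L, Z ≤ B → B ≤ A → B = Z ∨ B = A

/-- `A` is a minimal ideal of `L`. -/
def IsMinimalIdeal (A : LieIdeal F L) : Prop := IsMinModIdeal ⊥ A

/-- An ideal `A` of `L` is quasi-minimal if `A² = A` and `A/Z(A)` is a minimal ideal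
of `L/Z(A)`. -/
def IsQuasiMinimal (A : LieIdeal F L) : Prop :=
  ⁅A, A⁆ = A ∧ IsMinModIdeal (idealCenter A) A

end IdealDefs

section MoreDefs

variable (F : Type*) [Field F] (L : Type*) [LieRing L] [LieAlgebra F L]

/-- `E†(L)`: the subalgebra generated by the quasi-minimal components of `L`. -/
noncomputable def Edagger : LieSubalgebra F L :=
  LieSubalgebra.lieSpan F L (⋃ A ∈ {A : LieIdeal F L | IsQuasiMinimal A}, (A : Set L))

/-- `N†(L) = N(L) + E†(L)`: the quasi-minimal radical of `L`. -/
noncomputable def Ndagger : LieSubalgebra F L :=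
  LieIdeal.toLieSubalgebra F L (nilrad F L) ⊔ Edagger F L

/-- The generalised nilradical `N*(L)`: the ideal containing `N = N(L)` with
`N*(L)/N` the sum of all minimal ideals of `L/N` contained in `(N + C_L(N))/N`. -/
noncomputable def Nstar : LieIdeal F L :=
  nilrad F L ⊔ sSup {A : LieIdeal F L | IsMinModIdeal (nilrad F L) A ∧
    A ≤ nilrad F L ⊔ centralizer (nilrad F L)}

/-- The Frattini ideal: the largest ideal contained in every maximal subalgebra. -/
def frattini : LieIdeal F L :=
  sSup {I : LieIdeal F L | ∀ M : LieSubalgebra F L, IsCoatom M → (I : Set L) ⊆ M}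

/-- `Ñ(L)`: the ideal with `Ñ(L)/φ(L) = Soc (L/φ(L))`. -/
noncomputable def Ntilde : LieIdeal F L :=
  frattini F L ⊔ sSup {A : LieIdeal F L | IsMinModIdeal (frattini F L) A}

/-- A characteristic ideal: one invariant under all derivations. -/
def IsCharIdeal (J : LieIdeal F L) : Prop :=
  ∀ D : LieDerivation F L L, ∀ x ∈ J, D x ∈ J

/-- The characteristic radical `R_c(L)`: the sum of all solvable characteristic ideals. -/
noncomputable def charRadical : LieIdeal F L :=
  sSup {J : LieIdeal F L | LieAlgebra.IsSolvable J ∧ IsCharIdeal F L J}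

/-- A subideal: a subalgebra joined to `L` by a chain of successive ideals. -/
def IsSubideal (S : LieSubalgebra F L) : Prop :=
  ∃ n : ℕ, ∃ c : Fin (n + 1) → LieSubalgebra F L,
    c 0 = S ∧ c (Fin.last n) = ⊤ ∧
    ∀ i : Fin n, c i.castSucc ≤ c i.succ ∧
      ∀ x ∈ c i.succ, ∀ y ∈ c i.castSucc, ⁅x, y⁆ ∈ c i.castSucc

end MoreDefs

/-- A perfect subideal of a finite-dimensional Lie algebra is a characteristic ideal:
it is an ideal of `L` and is invariant under every derivation of `L`. -/
theorem stmt_0 (F : Type*) [Field F] (L : Type*) [LieRing L] [LieAlgebra F L]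
    [FiniteDimensional F L] (I : LieSubalgebra F L)
    (hsub : IsSubideal F L I)
    (hperf : Submodule.span F {z : L | ∃ x ∈ I, ∃ y ∈ I, z = ⁅x, y⁆} = I.toSubmodule) :
    (∀ x : L, ∀ y ∈ I, ⁅x, y⁆ ∈ I) ∧ (∀ D : LieDerivation F L L, ∀ x ∈ I, D x ∈ I) := by
  obtain ⟨n, c, hc0, hclast, hstep⟩ := hsub
  -- I is contained in every term of the chain
  have hIle : ∀ j : ℕ, ∀ hj : j ≤ n, ∀ y ∈ I, y ∈ c ⟨j, Nat.lt_succ_of_le hj⟩ := by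
    intro j
    induction j with
    | zero =>
      intro _ y hy
      have : (⟨0, Nat.lt_succ_of_le (Nat.zero_le n)⟩ : Fin (n + 1)) = 0 := rfl
      rw [this, hc0]; exact hy
    | succ k ih =>
      intro hj y hy
      have hk : k ≤ n := Nat.le_of_succ_le hj
      have h1 : y ∈ c ⟨k, Nat.lt_succ_of_le hk⟩ := ih hk y hy
      have h2 := (hstep ⟨k, hj⟩).1
      have e1 : (⟨k, hj⟩ : Fin n).castSucc = ⟨k, Nat.lt_succ_of_le hk⟩ := rfl
      have e2 : (⟨k, hj⟩ : Fin n).succ = ⟨k + 1, Nat.lt_succ_of_le hj⟩ := rfl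
      rw [e1, e2] at h2
      exact h2 h1
  -- key: I is an ideal of every term of the chain
  have key : ∀ j : ℕ, ∀ hj : j ≤ n,
      ∀ x ∈ c ⟨j, Nat.lt_succ_of_le hj⟩, ∀ y ∈ I, ⁅x, y⁆ ∈ I := by
    intro j
    induction j with
    | zero =>
      intro _ x hx y hy
      have : (⟨0, Nat.lt_succ_of_le (Nat.zero_le n)⟩ : Fin (n + 1)) = 0 := rfl
      rw [this, hc0] at hx
      exact I.lie_mem hx hy
    | succ k ih =>
      intro hj x hx y hy
      have hk : k ≤ n := Nat.le_of_succ_le hj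
      have hbr : ∀ z ∈ I, ⁅x, z⁆ ∈ c ⟨k, Nat.lt_succ_of_le hk⟩ := by
        intro z hz
        have h2 := (hstep ⟨k, hj⟩).2
        have e1 : (⟨k, hj⟩ : Fin n).castSucc = ⟨k, Nat.lt_succ_of_le hk⟩ := rfl
        have e2 : (⟨k, hj⟩ : Fin n).succ = ⟨k + 1, Nat.lt_succ_of_le hj⟩ := rfl
        rw [e1, e2] at h2
        exact h2 x hx z (hIle k hk z hz)
      have hy' : y ∈ Submodule.span F {z : L | ∃ a ∈ I, ∃ b ∈ I, z = ⁅a, b⁆} := by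
        rw [hperf]; exact hy
      refine Submodule.span_induction (p := fun z _ => ⁅x, z⁆ ∈ I) ?_ ?_ ?_ ?_ hy'
      · rintro z ⟨a, ha, b, hb, rfl⟩
        rw [leibniz_lie]
        refine I.add_mem ?_ ?_
        · exact ih hk _ (hbr a ha) b hb
        · rw [← lie_skew]
          exact I.neg_mem (ih hk _ (hbr b hb) a ha)
      · simp
      · intro u v _ _ hu hv
        rw [lie_add]; exact I.add_mem hu hv
      · intro t u _ hu
        rw [lie_smul]; exact I.smul_mem t hu
  have hideal : ∀ x : L, ∀ y ∈ I, ⁅x, y⁆ ∈ I := by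
    intro x y hy
    have hx : x ∈ c ⟨n, Nat.lt_succ_of_le le_rfl⟩ := by
      have : (⟨n, Nat.lt_succ_of_le le_rfl⟩ : Fin (n + 1)) = Fin.last n := rfl
      rw [this, hclast]; trivial
    exact key n le_rfl x hx y hy
  refine ⟨hideal, fun D x hx => ?_⟩
  have hx' : x ∈ Submodule.span F {z : L | ∃ a ∈ I, ∃ b ∈ I, z = ⁅a, b⁆} := by
    rw [hperf]; exact hx
  refine Submodule.span_induction (p := fun z _ => D z ∈ I) ?_ ?_ ?_ ?_ hx'
  · rintro z ⟨a, ha, b, hb, rfl⟩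
    rw [LieDerivation.apply_lie_eq_add]
    refine I.add_mem ?_ ?_
    · rw [← lie_skew]
      exact I.neg_mem (hideal _ _ ha)
    · exact hideal _ _ hb
  · simp
  · intro u v _ _ hu hv
    rw [map_add]; exact I.add_mem hu hv
  · intro t u _ hu
    rw [map_smul]; exact I.smul_mem t hu

end Paper
end

section
/- Let L be a finite-dimensional Lie algebra over any field and suppose A is an ideal of L with A² = A. Then Z(A) ⊆ φ(L). If moreover A is a quasi-minimal ideal of L, then Z(A) = A ∩ φ(L). -/
namespace Paper

open LieAlgebra

section Helpers

open Module

variable {F : Type*} [Field F] {L : Type*} [LieRing L] [LieAlgebra F L]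

lemma mem_idealCenter_iff {A : LieIdeal F L} {x : L} :
    x ∈ idealCenter A ↔ x ∈ A ∧ ∀ y ∈ A, ⁅x, y⁆ = 0 := Iff.rfl

lemma fitting [FiniteDimensional F L] (f : Module.End F L) :
    ∃ n : ℕ, 0 < n ∧ ∀ x : L, x ∈ LinearMap.ker (f ^ n) ⊔ LinearMap.range (f ^ n) := by
  set S : Set ℕ := Set.range (fun j : ℕ => finrank F (LinearMap.range (f ^ (j + 1)))) with hS
  have hne : S.Nonempty := ⟨_, ⟨0, rfl⟩⟩
  obtain ⟨k, hk⟩ := Nat.sInf_mem hne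
  simp only at hk
  have hmono : ∀ a b : ℕ, LinearMap.range (f ^ (a + b)) ≤ LinearMap.range (f ^ a) := by
    intro a b
    rw [pow_add]
    exact LinearMap.range_comp_le_range _ _
  have hrange : LinearMap.range (f ^ ((k + 1) + (k + 1))) = LinearMap.range (f ^ (k + 1)) := by
    apply Submodule.eq_of_le_of_finrank_le (hmono (k + 1) (k + 1))
    have h1 : finrank F (LinearMap.range (f ^ ((k + 1) + (k + 1)))) ∈ S := by
      refine ⟨k + 1 + k, ?_⟩
      simp only
      rw [show k + 1 + k + 1 = (k + 1) + (k + 1) by omega]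
    have h2 := Nat.sInf_le h1
    omega
  refine ⟨k + 1, Nat.succ_pos k, fun x => ?_⟩
  have hx : (f ^ (k + 1)) x ∈ LinearMap.range (f ^ ((k + 1) + (k + 1))) := hrange ▸ ⟨x, rfl⟩
  obtain ⟨y, hy⟩ := hx
  have hker : x - (f ^ (k + 1)) y ∈ LinearMap.ker (f ^ (k + 1)) := by
    rw [LinearMap.mem_ker, map_sub, ← Module.End.mul_apply, ← pow_add, hy, sub_self]
  have hxx : x = (x - (f ^ (k + 1)) y) + (f ^ (k + 1)) y := by abel
  rw [hxx]
  exact Submodule.add_mem _ (Submodule.mem_sup_left hker)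
    (Submodule.mem_sup_right ⟨y, rfl⟩)

lemma exists_coatom_ge [FiniteDimensional F L] (S : LieSubalgebra F L) (h : S ≠ ⊤) :
    ∃ M : LieSubalgebra F L, IsCoatom M ∧ S ≤ M := by
  suffices H : ∀ n : ℕ, ∀ S : LieSubalgebra F L,
      finrank F L - finrank F S.toSubmodule ≤ n → S ≠ ⊤ →
      ∃ M : LieSubalgebra F L, IsCoatom M ∧ S ≤ M from H _ S le_rfl h
  intro n
  induction n with
  | zero =>
    intro S hn hS
    exfalso
    apply hS
    have hle := Submodule.finrank_le S.toSubmodule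
    have h1 : finrank F S.toSubmodule = finrank F L := by omega
    have h2 : S.toSubmodule = ⊤ := Submodule.eq_top_of_finrank_eq h1
    refine le_antisymm le_top (fun x _ => ?_)
    rw [← LieSubalgebra.mem_toSubmodule (L' := S), h2]
    trivial
  | succ n ih =>
    intro S hn hS
    by_cases hco : ∀ T : LieSubalgebra F L, S < T → T = ⊤
    · exact ⟨S, ⟨hS, hco⟩, le_rfl⟩
    · push_neg at hco
      obtain ⟨T, hST, hT⟩ := hco
      have hle : S.toSubmodule ≤ T.toSubmodule := fun x hx =>
        (LieSubalgebra.mem_toSubmodule (L' := T)).mpr (hST.le ((LieSubalgebra.mem_toSubmodule (L' := S)).mp hx))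
      have hlt : S.toSubmodule < T.toSubmodule :=
        lt_of_le_of_ne hle (fun e => hST.ne ((LieSubalgebra.toSubmodule_inj _ _).mp e))
      have h3 := Submodule.finrank_lt_finrank_of_lt hlt
      have h4 := Submodule.finrank_le T.toSubmodule
      obtain ⟨M, hM, hTM⟩ := ih T (by omega) hT
      exact ⟨M, hM, hST.le.trans hTM⟩

lemma frattini_subset_coatom [FiniteDimensional F L] {M : LieSubalgebra F L}
    (hM : IsCoatom M) : ∀ x ∈ frattini F L, x ∈ M := by
  intro x hx
  have hx' : x ∈ LieSubmodule.toSubmodule (frattini F L) := hx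
  rw [frattini, LieSubmodule.sSup_toSubmodule] at hx'
  have hsup : sSup {s : Submodule F L |
      ∃ I ∈ {I : LieIdeal F L | ∀ M : LieSubalgebra F L, IsCoatom M → (I : Set L) ⊆ M},
        LieSubmodule.toSubmodule I = s} ≤ M.toSubmodule := by
    apply sSup_le
    rintro p ⟨I, hI, rfl⟩
    intro y hy
    exact hI M hM hy
  exact hsup hx'

end Helpers

/-- If `A` is a perfect ideal then `Z(A) ⊆ φ(L)`; if moreover `A` is quasi-minimal then
`Z(A) = A ∩ φ(L)`. -/
theorem stmt_7 (F : Type*) [Field F] (L : Type*) [LieRing L] [LieAlgebra F L]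
    [FiniteDimensional F L] (A : LieIdeal F L) (hperf : ⁅A, A⁆ = A) :
    idealCenter A ≤ frattini F L ∧
      (IsQuasiMinimal A → idealCenter A = A ⊓ frattini F L) := by
  classical
  -- Part 1: Z(A) is contained in every maximal subalgebra.
  have key : idealCenter A ∈ {I : LieIdeal F L |
      ∀ M : LieSubalgebra F L, IsCoatom M → (I : Set L) ⊆ M} := by
    intro M hM
    intro z hzZ
    by_contra hzM
    have hzZ' : z ∈ idealCenter A := hzZ
    set P : Submodule F L := M.toSubmodule ⊔ LieSubmodule.toSubmodule (idealCenter A) with hP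
    have hPlie : ∀ x ∈ P, ∀ y ∈ P, ⁅x, y⁆ ∈ P := by
      intro x hx y hy
      obtain ⟨m, hm, z1, hz1, rfl⟩ := Submodule.mem_sup.mp hx
      obtain ⟨m', hm', z2, hz2, rfl⟩ := Submodule.mem_sup.mp hy
      have hmM : m ∈ M := (LieSubalgebra.mem_toSubmodule (L' := M)).mp hm
      have hm'M : m' ∈ M := (LieSubalgebra.mem_toSubmodule (L' := M)).mp hm'
      have hz1Z : z1 ∈ idealCenter A := (LieSubmodule.mem_toSubmodule (N := _)).mp hz1
      have hz2Z : z2 ∈ idealCenter A := (LieSubmodule.mem_toSubmodule (N := _)).mp hz2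
      have e : ⁅m + z1, m' + z2⁆ =
          ⁅m, m'⁆ + (⁅m, z2⁆ + (⁅z1, m'⁆ + ⁅z1, z2⁆)) := by
        rw [add_lie, lie_add, lie_add]; abel
      rw [e]
      have t1 : ⁅m, z2⁆ ∈ idealCenter A := (idealCenter A).lie_mem hz2Z
      have t2 : ⁅z1, m'⁆ ∈ idealCenter A := by
        rw [← lie_skew]
        exact neg_mem ((idealCenter A).lie_mem hz1Z)
      have t3 : ⁅z1, z2⁆ ∈ idealCenter A := (idealCenter A).lie_mem hz2Z
      exact Submodule.add_mem _
        (Submodule.mem_sup_left ((LieSubalgebra.mem_toSubmodule (L' := M)).mpr (M.lie_mem hmM hm'M)))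
        (Submodule.mem_sup_right ((LieSubmodule.mem_toSubmodule (N := _)).mpr
          (add_mem t1 (add_mem t2 t3))))
    set M' : LieSubalgebra F L := { P with lie_mem' := fun hx hy => hPlie _ hx _ hy } with hM'
    have hmemM' : ∀ x : L, x ∈ M' ↔ x ∈ P := fun x => Iff.rfl
    have hMleM' : M ≤ M' := fun x hx =>
      (hmemM' x).mpr (Submodule.mem_sup_left ((LieSubalgebra.mem_toSubmodule (L' := M)).mpr hx))
    have hzM' : z ∈ M' := (hmemM' z).mpr
      (Submodule.mem_sup_right ((LieSubmodule.mem_toSubmodule (N := _)).mpr hzZ'))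
    have hMne : M ≠ M' := fun e => hzM (e ▸ hzM')
    have htop : M' = ⊤ := hM.2 M' (lt_of_le_of_ne hMleM' hMne)
    have hallP : ∀ x : L, x ∈ P := by
      intro x
      have hx : x ∈ M' := by rw [htop]; exact LieSubalgebra.mem_top x
      exact (hmemM' x).mp hx
    -- N = M ∩ A is an ideal of L
    have hNlie : ∀ (x n : L), n ∈ M.toSubmodule ⊓ LieSubmodule.toSubmodule A →
        ⁅x, n⁆ ∈ M.toSubmodule ⊓ LieSubmodule.toSubmodule A := by
      intro x n hn
      obtain ⟨hnM, hnA⟩ := Submodule.mem_inf.mp hn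
      have hnM' : n ∈ M := (LieSubalgebra.mem_toSubmodule (L' := M)).mp hnM
      have hnA' : n ∈ A := (LieSubmodule.mem_toSubmodule (N := _)).mp hnA
      obtain ⟨m, hm, z1, hz1, rfl⟩ := Submodule.mem_sup.mp (hallP x)
      have hmM : m ∈ M := (LieSubalgebra.mem_toSubmodule (L' := M)).mp hm
      have hz1Z : z1 ∈ idealCenter A := (LieSubmodule.mem_toSubmodule (N := _)).mp hz1
      have e : ⁅m + z1, n⁆ = ⁅m, n⁆ + ⁅z1, n⁆ := add_lie m z1 n
      have hz1n : ⁅z1, n⁆ = 0 := hz1Z.2 n hnA'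
      rw [e, hz1n, add_zero]
      exact Submodule.mem_inf.mpr
        ⟨(LieSubalgebra.mem_toSubmodule (L' := M)).mpr (M.lie_mem hmM hnM'),
         (LieSubmodule.mem_toSubmodule (N := _)).mpr (A.lie_mem hnA')⟩
    set N : LieIdeal F L :=
      { M.toSubmodule ⊓ LieSubmodule.toSubmodule A with
        lie_mem := fun {x n} hn => hNlie x n hn } with hN
    have hmemN : ∀ x : L, x ∈ N ↔ x ∈ M.toSubmodule ⊓ LieSubmodule.toSubmodule A :=
      fun x => Iff.rfl
    have hAN : A ≤ N := by
      conv_lhs => rw [← hperf]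
      rw [LieSubmodule.lieIdeal_oper_eq_span, LieSubmodule.lieSpan_le]
      rintro w ⟨⟨x, hx⟩, ⟨y, hy⟩, rfl⟩
      obtain ⟨m, hm, z1, hz1, hx'⟩ := Submodule.mem_sup.mp (hallP x)
      obtain ⟨m', hm', z2, hz2, hy'⟩ := Submodule.mem_sup.mp (hallP y)
      have hmM : m ∈ M := (LieSubalgebra.mem_toSubmodule (L' := M)).mp hm
      have hm'M : m' ∈ M := (LieSubalgebra.mem_toSubmodule (L' := M)).mp hm'
      have hz1Z : z1 ∈ idealCenter A := (LieSubmodule.mem_toSubmodule (N := _)).mp hz1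
      have hz2Z : z2 ∈ idealCenter A := (LieSubmodule.mem_toSubmodule (N := _)).mp hz2
      have hmA : m ∈ A := by
        have : (x : L) - z1 ∈ A := A.sub_mem hx hz1Z.1
        rwa [← hx', add_sub_cancel_right] at this
      have hm'A : m' ∈ A := by
        have : (y : L) - z2 ∈ A := A.sub_mem hy hz2Z.1
        rwa [← hy', add_sub_cancel_right] at this
      have e : ⁅(x : L), (y : L)⁆ = ⁅m, m'⁆ := by
        rw [← hx', ← hy', add_lie, lie_add, lie_add]
        rw [hz1Z.2 m' hm'A, hz1Z.2 z2 hz2Z.1]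
        have : ⁅m, z2⁆ = 0 := by rw [← lie_skew, hz2Z.2 m hmA, neg_zero]
        rw [this]
        abel
      show ⁅(x : L), (y : L)⁆ ∈ N
      rw [e, hmemN]
      exact Submodule.mem_inf.mpr
        ⟨(LieSubalgebra.mem_toSubmodule (L' := M)).mpr (M.lie_mem hmM hm'M),
         (LieSubmodule.mem_toSubmodule (N := _)).mpr (A.lie_mem hm'A)⟩
    have hzA : z ∈ A := hzZ'.1
    have hzN : z ∈ N := hAN hzA
    exact hzM ((LieSubalgebra.mem_toSubmodule (L' := M)).mp (Submodule.mem_inf.mp ((hmemN z).mp hzN)).1)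
  have part1 : idealCenter A ≤ frattini F L := le_sSup key
  refine ⟨part1, fun hqm => ?_⟩
  have hZA : idealCenter A ≤ A := fun x hx => (mem_idealCenter_iff.mp hx).1
  refine le_antisymm (le_inf hZA part1) ?_
  rcases hqm.2.2 (A ⊓ frattini F L) (le_inf hZA part1) inf_le_left with h | h
  · exact h.le
  · exfalso
    have hAf : A ≤ frattini F L := h ▸ inf_le_right
    have hAbot : A ≠ ⊥ := by
      intro e
      have := hqm.2.1
      rw [e] at this
      exact not_lt_bot this
    -- there is an element of A whose adjoint action is not nilpotent
    have hA_ex : ∃ a ∈ A, ¬ IsNilpotent (ad F L a) := by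
      by_contra hall
      push_neg at hall
      set K : LieSubalgebra F L := LieIdeal.toLieSubalgebra F L A with hK
      haveI hnoeth : IsNoetherian F K := inferInstanceAs (IsNoetherian F K.toSubmodule)
      have hforall : ∀ x : K, IsNilpotent (LieModule.toEnd F K L x) := by
        intro x
        have hx : (x : L) ∈ A := x.2
        have he : LieModule.toEnd F K L x = ad F L (x : L) := by ext m; rfl
        rw [he]
        exact hall _ hx
      have hnilp : LieModule.IsNilpotent K L :=
        LieAlgebra.isEngelian_of_isNoetherian L hforall
      obtain ⟨j, hj⟩ := (LieModule.isNilpotent_iff F K L).mp hnilp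
      have hled : ∀ j : ℕ, LieSubmodule.toSubmodule A ≤
          LieSubmodule.toSubmodule (LieModule.lowerCentralSeries F K L j) := by
        intro j
        induction j with
        | zero => simp
        | succ j ih =>
          rw [LieModule.lowerCentralSeries_succ]
          conv_lhs => rw [← hperf]
          rw [LieSubmodule.lieIdeal_oper_eq_linear_span]
          apply Submodule.span_le.mpr
          rintro w ⟨⟨x, hx⟩, ⟨y, hy⟩, rfl⟩
          have hyc : y ∈ LieModule.lowerCentralSeries F K L j :=
            (LieSubmodule.mem_toSubmodule (N := _)).mp (ih ((LieSubmodule.mem_toSubmodule (N := _)).mpr hy))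
          exact (LieSubmodule.mem_toSubmodule (N := _)).mpr
            (LieSubmodule.lie_mem_lie (LieSubmodule.mem_top (⟨x, hx⟩ : K)) hyc)
      have hbot := hled j
      rw [hj] at hbot
      apply hAbot
      apply le_bot_iff.mp
      intro x hx
      have := hbot hx
      simpa using this
    obtain ⟨a, haA, hnil⟩ := hA_ex
    have hEng : LieSubalgebra.engel F a ≠ ⊤ := by
      intro e
      apply hnil
      refine ((LinearMap.charpoly_nilpotent_tfae (ad F L a)).out 0 2).mpr ?_
      intro m
      have hm : m ∈ LieSubalgebra.engel F a := by rw [e]; exact LieSubalgebra.mem_top m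
      exact (LieSubalgebra.mem_engel_iff F a m).mp hm
    obtain ⟨M, hM, hEM⟩ := exists_coatom_ge (LieSubalgebra.engel F a) hEng
    obtain ⟨n, hn1, hsup⟩ := fitting (ad F L a)
    have hpowA : ∀ m : ℕ, ∀ y : L, y ∈ A → ((ad F L a) ^ m) y ∈ A := by
      intro m
      induction m with
      | zero => intro y hy; simpa using hy
      | succ m ih =>
        intro y hy
        rw [pow_succ, Module.End.mul_apply]
        exact ih _ (A.lie_mem hy)
    have hrangeA : ∀ y : L, ((ad F L a) ^ n) y ∈ A := by
      intro y
      obtain ⟨m, rfl⟩ : ∃ m, n = m + 1 := ⟨n - 1, by omega⟩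
      rw [pow_succ, Module.End.mul_apply]
      apply hpowA
      show ⁅a, y⁆ ∈ A
      rw [← lie_skew]
      exact neg_mem (A.lie_mem haA)
    have hallM : ∀ x : L, x ∈ M := by
      intro x
      rcases Submodule.mem_sup.mp (hsup x) with ⟨u, hu, v, hv, rfl⟩
      have huE : u ∈ LieSubalgebra.engel F a := by
        rw [LieSubalgebra.mem_engel_iff]
        exact ⟨n, LinearMap.mem_ker.mp hu⟩
      have huM : u ∈ M := hEM huE
      obtain ⟨w, rfl⟩ := hv
      have hvA : ((ad F L a) ^ n) w ∈ A := hrangeA w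
      have hvM : ((ad F L a) ^ n) w ∈ M := frattini_subset_coatom hM _ (hAf hvA)
      exact M.add_mem huM hvM
    exact hM.1 (le_antisymm le_top (fun x _ => hallM x))


end Paper
end

section
/- Let L be a finite-dimensional Lie algebra over a field F and let A be an ideal of L such that A/Z(A) is a non-abelian minimal ideal of L/Z(A). Then A = A² + Z(A) and A² is a quasi-minimal ideal of L. -/
namespace Paper

open LieAlgebra

/-- If `A/Z(A)` is a non-abelian minimal ideal of `L/Z(A)` then `A = A² + Z(A)` and `A²`
is a quasi-minimal ideal of `L`. -/
theorem stmt_8 (F : Type*) [Field F] (L : Type*) [LieRing L] [LieAlgebra F L]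
    [FiniteDimensional F L] (A : LieIdeal F L)
    (hmin : IsMinModIdeal (idealCenter A) A)
    (hna : ¬⁅A, A⁆ ≤ idealCenter A) :
    A = ⁅A, A⁆ ⊔ idealCenter A ∧ IsQuasiMinimal ⁅A, A⁆ := by
  set Z := idealCenter A with hZdef
  set D : LieIdeal F L := ⁅A, A⁆ with hDdef
  have hZA : Z ≤ A := fun x hx => hx.1
  have hDA : D ≤ A := LieSubmodule.lie_le_left A A
  have hZc : ∀ z ∈ Z, ∀ a ∈ A, ⁅z, a⁆ = 0 := fun z hz => hz.2
  have hcZ : ∀ a ∈ A, ∀ z ∈ Z, ⁅a, z⁆ = 0 := by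
    intro a ha z hz
    rw [← lie_skew, hZc z hz a ha, neg_zero]
  have hA : A = D ⊔ Z := by
    rcases hmin.2 (D ⊔ Z) le_sup_right (sup_le hDA hZA) with h | h
    · exact absurd (le_sup_left.trans h.le) hna
    · exact h.symm
  have hDZ : ⁅D, Z⁆ = (⊥ : LieIdeal F L) := by
    rw [eq_bot_iff, LieSubmodule.lie_le_iff]
    intro x hx z hz
    rw [hcZ x (hDA hx) z hz]; exact (⊥ : LieIdeal F L).zero_mem
  have hZD : ⁅Z, D⁆ = (⊥ : LieIdeal F L) := by
    rw [eq_bot_iff, LieSubmodule.lie_le_iff]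
    intro z hz x hx
    rw [hZc z hz x (hDA hx)]; exact (⊥ : LieIdeal F L).zero_mem
  have hZZ : ⁅Z, Z⁆ = (⊥ : LieIdeal F L) := by
    rw [eq_bot_iff, LieSubmodule.lie_le_iff]
    intro z hz x hx
    rw [hZc z hz x (hZA hx)]; exact (⊥ : LieIdeal F L).zero_mem
  have hDD : ⁅D, D⁆ = D := by
    conv_rhs => rw [hDdef]
    conv_rhs => rw [hA]
    rw [LieSubmodule.sup_lie, LieSubmodule.lie_sup, LieSubmodule.lie_sup, hDZ, hZD, hZZ]
    simp
  have hZDcenter : idealCenter D = Z ⊓ D := by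
    apply le_antisymm
    · intro x hx
      rcases hx with ⟨hxD, hxc⟩
      refine ⟨⟨hDA hxD, ?_⟩, hxD⟩
      intro y hy
      rw [hA] at hy
      rcases (LieSubmodule.mem_sup _ _ _).1 hy with ⟨d, hd, z, hz, rfl⟩
      rw [lie_add, hxc d hd, hcZ x (hDA hxD) z hz, add_zero]
    · intro x hx
      exact ⟨hx.2, fun y hy => hZc x hx.1 y (hDA hy)⟩
  refine ⟨hA, hDD, ?_⟩
  rw [hZDcenter]
  constructor
  · refine lt_of_le_of_ne inf_le_right (fun h => hna ?_)
    exact h ▸ inf_le_left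
  · intro B hZB hBD
    rcases hmin.2 (B ⊔ Z) le_sup_right (sup_le (hBD.trans hDA) hZA) with h | h
    · left
      have hB : B ≤ Z := le_sup_left.trans h.le
      exact le_antisymm (le_inf hB hBD) hZB
    · right
      have hDB : D ≤ B := by
        have : ⁅B ⊔ Z, B ⊔ Z⁆ ≤ B := by
          rw [LieSubmodule.sup_lie, LieSubmodule.lie_sup, LieSubmodule.lie_sup, hZZ]
          have h1 : ⁅B, B⁆ ≤ B := LieSubmodule.lie_le_left B B
          have h2 : ⁅B, Z⁆ ≤ B := LieSubmodule.lie_le_left B Z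
          have h3 : ⁅Z, B⁆ ≤ B := LieSubmodule.lie_le_right B Z
          simp only [sup_le_iff]
          exact ⟨⟨h1, h2⟩, h3, bot_le⟩
        calc D = ⁅A, A⁆ := rfl
          _ = ⁅B ⊔ Z, B ⊔ Z⁆ := by rw [h]
          _ ≤ B := this
      exact le_antisymm hBD hDB

end Paper
end

section
/- Let L be a finite-dimensional Lie algebra over any field F and let I be an ideal of L. Then (N†(L) + I)/I ⊆ N†(L/I). -/
namespace Paper

open LieAlgebra

section Aux

variable {F : Type*} [Field F] {L : Type*} [LieRing L] [LieAlgebra F L]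

/-- The quotient map `L → L ⧸ I` as a morphism of Lie algebras. -/
def quotMk (I : LieIdeal F L) : L →ₗ⁅F⁆ L ⧸ I :=
  { (I : Submodule F L).mkQ with
    toFun := LieSubmodule.Quotient.mk (N := I)
    map_lie' := fun {_ _} => rfl }

lemma quotMk_apply (I : LieIdeal F L) (x : L) :
    quotMk I x = LieSubmodule.Quotient.mk (N := I) x := rfl

lemma quotMk_surjective (I : LieIdeal F L) : Function.Surjective (quotMk I) :=
  Quot.mk_surjective

lemma quotMk_eq_zero_iff {I : LieIdeal F L} {x : L} : quotMk I x = 0 ↔ x ∈ I :=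
  LieSubmodule.Quotient.mk_eq_zero' (N := I)

lemma quotMk_eq_zero {I : LieIdeal F L} {x : L} (hx : x ∈ I) : quotMk I x = 0 :=
  quotMk_eq_zero_iff.2 hx

variable {L' : Type*} [LieRing L'] [LieAlgebra F L']

/-- Restriction of a Lie algebra morphism to an ideal, with codomain its image. -/
def idealRestrict (f : L →ₗ⁅F⁆ L') (J : LieIdeal F L) : J →ₗ⁅F⁆ LieIdeal.map f J where
  toFun x := ⟨f x, LieIdeal.mem_map x.2⟩
  map_add' x y := by ext; simp
  map_smul' c x := by ext; simp
  map_lie' {x y} := by ext; simp [LieIdeal.coe_bracket_of_module]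

lemma idealRestrict_surjective (f : L →ₗ⁅F⁆ L') (hf : Function.Surjective f)
    (J : LieIdeal F L) : Function.Surjective (idealRestrict f J) := by
  rintro ⟨y, hy⟩
  obtain ⟨⟨x, hx⟩, h⟩ := LieIdeal.mem_map_of_surjective hf hy
  exact ⟨⟨x, hx⟩, Subtype.ext h⟩

lemma map_nilpotent (f : L →ₗ⁅F⁆ L') (hf : Function.Surjective f) (J : LieIdeal F L)
    (hJ : LieRing.IsNilpotent J) : LieRing.IsNilpotent (LieIdeal.map f J) :=
  (idealRestrict_surjective f hf J).lieAlgebra_isNilpotent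

lemma idealCenter_le (A : LieIdeal F L) : idealCenter A ≤ A := fun _ hx => hx.1

/-- The key dichotomy: a quasi-minimal ideal either maps to a quasi-minimal ideal
of the quotient, or is contained in the ideal we quotient by. -/
lemma quasiMinimal_map_or_le (I A : LieIdeal F L) (hA : IsQuasiMinimal A) :
    A ≤ I ∨ IsQuasiMinimal (LieIdeal.map (quotMk I) A) := by
  obtain ⟨hAA, hZlt, hmin⟩ := hA
  set π := quotMk I
  have hsurj : Function.Surjective π := quotMk_surjective I
  rcases hmin ((A ⊓ I) ⊔ idealCenter A) le_sup_right
      (sup_le inf_le_left (idealCenter_le A)) with hZ | hA'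
  · -- A ⊓ I ≤ Z(A): the image is quasi-minimal
    right
    have hAI : A ⊓ I ≤ idealCenter A := le_sup_left.trans hZ.le
    set Abar := LieIdeal.map π A with hAbar
    -- the image of the center is central
    have hπZ : ∀ z ∈ idealCenter A, π z ∈ idealCenter Abar := by
      intro z hz
      refine ⟨LieIdeal.mem_map hz.1, fun y hy => ?_⟩
      obtain ⟨⟨a, ha⟩, rfl⟩ := LieIdeal.mem_map_of_surjective hsurj hy
      rw [← LieHom.map_lie, hz.2 a ha, map_zero]
    have hbr : ⁅Abar, Abar⁆ = Abar := by
      rw [hAbar, ← LieIdeal.map_bracket_eq (f := π) hsurj, hAA]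
    refine ⟨hbr, ?_, ?_⟩
    · -- Z(Abar) < Abar
      refine lt_of_le_of_ne (idealCenter_le Abar) fun hEq => ?_
      have habelian : ⁅Abar, Abar⁆ = ⊥ := by
        rw [LieSubmodule.lie_eq_bot_iff]
        intro x hx m hm
        exact (hEq.ge hx).2 m hm
      have hbot : Abar = ⊥ := by rw [← hbr, habelian]
      have hAle : A ≤ idealCenter A := by
        intro a ha
        have : π a ∈ (⊥ : LieIdeal F (L ⧸ I)) := hbot ▸ LieIdeal.mem_map ha
        have haI : a ∈ I := quotMk_eq_zero_iff.1 this
        exact hAI ⟨ha, haI⟩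
      exact (lt_iff_le_not_ge.1 hZlt).2 hAle
    · -- minimality of Abar / Z(Abar)
      intro Bbar hZB hBA
      have hZB' : idealCenter A ≤ LieIdeal.comap π Bbar ⊓ A := by
        intro z hz
        exact ⟨hZB (hπZ z hz), hz.1⟩
      rcases hmin (LieIdeal.comap π Bbar ⊓ A) hZB' inf_le_right with hB | hB
      · -- B = Z(A) : Bbar = Z(Abar)
        left
        refine le_antisymm (fun b hb => ?_) hZB
        obtain ⟨⟨a, ha⟩, rfl⟩ := LieIdeal.mem_map_of_surjective hsurj (hBA hb)
        exact hπZ a (hB ▸ (⟨hb, ha⟩ : a ∈ LieIdeal.comap π Bbar ⊓ A))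
      · -- B = A : Bbar = Abar
        right
        refine le_antisymm hBA ?_
        rw [hAbar, LieIdeal.map_le_iff_le_comap]
        intro a ha
        exact (hB.ge ha).1
  · -- (A ⊓ I) ⊔ Z(A) = A : then A = ⁅A,A⁆ ≤ I
    left
    have hzero : ⁅A, idealCenter A⁆ = ⊥ := by
      rw [LieSubmodule.lie_eq_bot_iff]
      intro x hx m hm
      have : ⁅m, x⁆ = 0 := hm.2 x hx
      rw [← lie_skew, this, neg_zero]
    calc A = ⁅A, (A ⊓ I) ⊔ idealCenter A⁆ := by rw [hA', hAA]
      _ = ⁅A, A ⊓ I⁆ ⊔ ⁅A, idealCenter A⁆ := LieSubmodule.lie_sup (A ⊓ I) (idealCenter A) A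
      _ ≤ (A ⊓ I) ⊔ ⊥ := sup_le_sup (LieSubmodule.lie_le_right _ _) hzero.le
      _ ≤ I := by simp

end Aux

/-- For any ideal `I`, `(N†(L) + I)/I ⊆ N†(L/I)`. -/
theorem stmt_16 (F : Type*) [Field F] (L : Type*) [LieRing L] [LieAlgebra F L]
    [FiniteDimensional F L] (I : LieIdeal F L) :
    ∀ x ∈ Ndagger F L,
      LieSubmodule.Quotient.mk (N := I) x ∈ Ndagger F (L ⧸ I) := by
  set π := quotMk (F := F) I with hπ
  have hsurj : Function.Surjective π := quotMk_surjective I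
  suffices h : Ndagger F L ≤ (Ndagger F (L ⧸ I)).comap π by
    intro x hx
    exact h hx
  rw [Ndagger]
  refine sup_le ?_ ?_
  · -- nilradical part
    intro x hx
    have hx' : x ∈ nilrad F L := hx
    show π x ∈ Ndagger F (L ⧸ I)
    have hle : nilrad F L ≤ LieIdeal.comap π (nilrad F (L ⧸ I)) := by
      rw [nilrad]
      refine sSup_le fun J hJ => ?_
      rw [← LieIdeal.map_le_iff_le_comap]
      exact le_sSup (map_nilpotent π hsurj J hJ)
    have : π x ∈ nilrad F (L ⧸ I) := hle hx'
    exact le_sup_left (a := LieIdeal.toLieSubalgebra F (L ⧸ I) (nilrad F (L ⧸ I)))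
      (b := Edagger F (L ⧸ I)) this
  · -- Edagger part
    rw [Edagger, LieSubalgebra.lieSpan_le]
    intro x hx
    simp only [Set.mem_iUnion] at hx
    obtain ⟨A, hAqm, hxA⟩ := hx
    show x ∈ LieSubalgebra.comap π (Ndagger F (L ⧸ I))
    show π x ∈ Ndagger F (L ⧸ I)
    rcases quasiMinimal_map_or_le I A hAqm with hle | hqm
    · have : π x = 0 := quotMk_eq_zero (hle hxA)
      rw [this]
      exact (Ndagger F (L ⧸ I)).zero_mem
    · refine le_sup_right (a := LieIdeal.toLieSubalgebra F (L ⧸ I) (nilrad F (L ⧸ I)))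
        (b := Edagger F (L ⧸ I)) ?_
      apply LieSubalgebra.subset_lieSpan
      simp only [Set.mem_iUnion]
      exact ⟨LieIdeal.map π A, hqm, LieIdeal.mem_map hxA⟩

end Paper
end

section
/- Let L be a finite-dimensional Lie algebra over any field F, with nilradical N = N(L). Then C_L(Ñ(L)) ⊆ Z(N) ⊆ Ñ(L). -/
namespace Paper

open LieAlgebra

section Aux

variable {F : Type*} [Field F] {L : Type*} [LieRing L] [LieAlgebra F L]

lemma exists_min_nat {α : Type*} (m : α → ℕ) {p : α → Prop} (h : ∃ a, p a) :
    ∃ a, p a ∧ ∀ b, p b → m a ≤ m b := by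
  obtain ⟨a0, ha0⟩ := h
  obtain ⟨a, hpa, hma⟩ := Nat.sInf_mem (⟨m a0, a0, ha0, rfl⟩ :
    {n | ∃ a, p a ∧ m a = n}.Nonempty)
  exact ⟨a, hpa, fun b hb => hma ▸ Nat.sInf_le ⟨b, hb, rfl⟩⟩

/-- The sum of an ideal and a subalgebra is a subalgebra. -/
def idealSupSubalg (J : LieIdeal F L) (M : LieSubalgebra F L) : LieSubalgebra F L :=
  { (J.toSubmodule ⊔ M.toSubmodule : Submodule F L) with
    lie_mem' := by
      intro x y hx hy
      obtain ⟨j, hj, m, hm, rfl⟩ := Submodule.mem_sup.mp hx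
      obtain ⟨j', hj', m', hm', rfl⟩ := Submodule.mem_sup.mp hy
      have e : ⁅j + m, j' + m'⁆ = (⁅j, j'⁆ + ⁅j, m'⁆ + ⁅m, j'⁆) + ⁅m, m'⁆ := by
        simp only [add_lie, lie_add]; abel
      show ⁅j + m, j' + m'⁆ ∈ J.toSubmodule ⊔ M.toSubmodule
      rw [e]
      refine Submodule.add_mem _ (Submodule.mem_sup_left ?_)
        (Submodule.mem_sup_right (M.lie_mem hm hm'))
      refine Submodule.add_mem _ (Submodule.add_mem _ (J.lie_mem hj') ?_) (J.lie_mem hj')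
      rw [← lie_skew]
      exact Submodule.neg_mem _ (J.lie_mem hj) }

lemma mem_idealSupSubalg {J : LieIdeal F L} {M : LieSubalgebra F L} {x : L} :
    x ∈ idealSupSubalg J M ↔ x ∈ J.toSubmodule ⊔ M.toSubmodule := Iff.rfl

lemma idealSupSubalg_toSubmodule {J : LieIdeal F L} {M : LieSubalgebra F L} :
    (idealSupSubalg J M).toSubmodule = J.toSubmodule ⊔ M.toSubmodule := rfl

/-- The normalizer of a subspace. -/
def normSubalg (J : Submodule F L) : LieSubalgebra F L where
  carrier := {x : L | ∀ j ∈ J, ⁅x, j⁆ ∈ J}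
  zero_mem' := by intro j hj; rw [zero_lie]; exact J.zero_mem
  add_mem' := by intro a b ha hb j hj; rw [add_lie]; exact J.add_mem (ha j hj) (hb j hj)
  smul_mem' := by intro c x hx j hj; rw [smul_lie]; exact J.smul_mem c (hx j hj)
  lie_mem' := by
    intro x y hx hy j hj
    rw [lie_lie]
    exact J.sub_mem (hx _ (hy j hj)) (hy _ (hx j hj))

lemma mem_normSubalg {J : Submodule F L} {x : L} :
    x ∈ normSubalg J ↔ ∀ j ∈ J, ⁅x, j⁆ ∈ J := Iff.rfl

/-- Iterated bracket of an ideal with itself (lower central series as ideals of `L`). -/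
def idlcs (I : LieIdeal F L) : ℕ → LieIdeal F L
  | 0 => I
  | (n + 1) => ⁅I, idlcs I n⁆

lemma idlcs_le_self (I : LieIdeal F L) : ∀ n, idlcs I n ≤ I
  | 0 => le_rfl
  | (n + 1) => LieSubmodule.lie_le_left I (idlcs I n)

lemma sSup_toSubmodule_le {S : Set (LieIdeal F L)} {q : Submodule F L}
    (h : ∀ I ∈ S, I.toSubmodule ≤ q) : (sSup S).toSubmodule ≤ q := by
  rw [LieSubmodule.sSup_toSubmodule]
  exact sSup_le (by rintro p ⟨I, hI, rfl⟩; exact h I hI)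

lemma ideal_le_ideal {I J : LieIdeal F L} (h : I.toSubmodule ≤ J.toSubmodule) : I ≤ J := h

lemma ideal_le_ideal' {I J : LieIdeal F L} (h : I ≤ J) : I.toSubmodule ≤ J.toSubmodule := h

lemma le_frattini {J : LieIdeal F L}
    (h : ∀ M : LieSubalgebra F L, IsCoatom M → (J : Set L) ⊆ M) :
    J ≤ frattini F L := le_sSup h

lemma frattini_le_Ntilde : frattini F L ≤ Ntilde F L := le_sup_left

lemma minmod_le_Ntilde {A : LieIdeal F L} (hA : IsMinModIdeal (frattini F L) A) :
    A ≤ Ntilde F L :=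
  le_trans (le_sSup (s := {A : LieIdeal F L | IsMinModIdeal (frattini F L) A}) hA) le_sup_right

variable [FiniteDimensional F L]

lemma frattini_le_coatom {M : LieSubalgebra F L} (hM : IsCoatom M) :
    (frattini F L).toSubmodule ≤ M.toSubmodule := by
  rw [frattini]
  exact sSup_toSubmodule_le fun I hI y hy => hI M hM hy

end Aux
section Aux2

variable {F : Type*} [Field F] {L : Type*} [LieRing L] [LieAlgebra F L]
variable [FiniteDimensional F L]

/-- Barnes-type complement lemma: an ideal `B ⊇ φ` that is abelian mod `φ` has a
subalgebra complement over `φ`. -/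
lemma complement_lemma {B : LieIdeal F L}
    (hφB : (frattini F L).toSubmodule ≤ B.toSubmodule)
    (hBB : ∀ x ∈ B, ∀ y ∈ B, ⁅x, y⁆ ∈ frattini F L) :
    ∃ U : LieSubalgebra F L, (frattini F L).toSubmodule ≤ U.toSubmodule ∧
      B.toSubmodule ⊔ U.toSubmodule = ⊤ ∧
      B.toSubmodule ⊓ U.toSubmodule = (frattini F L).toSubmodule := by
  -- choose U minimal with φ ≤ U and B + U = L
  obtain ⟨U, ⟨hφU, hsup⟩, hUmin⟩ := exists_min_nat
    (fun U : LieSubalgebra F L => Module.finrank F U.toSubmodule)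
    (p := fun U : LieSubalgebra F L =>
      (frattini F L).toSubmodule ≤ U.toSubmodule ∧ B.toSubmodule ⊔ U.toSubmodule = ⊤)
    ⟨⊤, le_top, by simp⟩
  have hdecomp : ∀ x : L, ∃ b ∈ B.toSubmodule, ∃ u ∈ U.toSubmodule, b + u = x := by
    intro x
    have hx : x ∈ B.toSubmodule ⊔ U.toSubmodule := by rw [hsup]; exact Submodule.mem_top
    obtain ⟨b, hb, u, hu, h⟩ := Submodule.mem_sup.mp hx
    exact ⟨b, hb, u, hu, h⟩
  -- J := B ∩ U is an ideal of L
  set Jsub : Submodule F L := B.toSubmodule ⊓ U.toSubmodule with hJsub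
  have hφJ : (frattini F L).toSubmodule ≤ Jsub := le_inf hφB hφU
  have hJlie : ∀ (x : L), ∀ m ∈ Jsub, ⁅x, m⁆ ∈ Jsub := by
    intro x m hm
    obtain ⟨b, hb, u, hu, rfl⟩ := hdecomp x
    rw [add_lie]
    refine Submodule.add_mem _ (hφJ (hBB b hb m hm.1)) ?_
    exact ⟨B.lie_mem hm.1, U.lie_mem hu hm.2⟩
  set J : LieIdeal F L := { Jsub with lie_mem := fun {x m} hm => hJlie x m hm } with hJ
  have hJB : J.toSubmodule ≤ B.toSubmodule := inf_le_left
  have hJU : J.toSubmodule ≤ U.toSubmodule := inf_le_right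
  -- J is contained in every maximal subalgebra
  have hJM : ∀ M : LieSubalgebra F L, IsCoatom M → (J : Set L) ⊆ M := by
    intro M hM
    by_contra hnot
    obtain ⟨z, hzJ, hzM⟩ := Set.not_subset.mp hnot
    -- L = J + M
    have hJMtop : J.toSubmodule ⊔ M.toSubmodule = ⊤ := by
      have hlt : M < idealSupSubalg J M := by
        refine lt_of_le_of_ne (fun w hw => Submodule.mem_sup_right hw) ?_
        intro he
        exact hzM (by rw [he]; exact mem_idealSupSubalg.mpr (Submodule.mem_sup_left hzJ))
      have h1 := hM.2 _ hlt
      have h2 : (idealSupSubalg J M).toSubmodule = (⊤ : LieSubalgebra F L).toSubmodule := by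
        rw [h1]
      rwa [idealSupSubalg_toSubmodule] at h2
    have hUM_ne : ¬ U.toSubmodule ≤ M.toSubmodule := fun h => hzM (h (hJU hzJ))
    -- choose V maximal among proper subalgebras of U containing U ⊓ M
    obtain ⟨V, ⟨hV0, hVU⟩, hVmaxRaw⟩ := exists_min_nat
      (fun V : LieSubalgebra F L => Module.finrank F L - Module.finrank F V.toSubmodule)
      (p := fun V : LieSubalgebra F L =>
        U.toSubmodule ⊓ M.toSubmodule ≤ V.toSubmodule ∧ V.toSubmodule < U.toSubmodule)
      ⟨U ⊓ M, le_rfl, lt_of_le_of_ne inf_le_left (fun he => hUM_ne (he ▸ inf_le_right))⟩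
    have hVmax' : ∀ W : LieSubalgebra F L, V.toSubmodule < W.toSubmodule →
        W.toSubmodule ≤ U.toSubmodule → W.toSubmodule = U.toSubmodule := by
      intro W hVW hWU
      by_contra hne
      have h1 := hVmaxRaw W ⟨le_trans hV0 (le_of_lt hVW), lt_of_le_of_ne hWU hne⟩
      have h2 : Module.finrank F V.toSubmodule < Module.finrank F W.toSubmodule :=
        Submodule.finrank_lt_finrank_of_lt hVW
      have h3 : Module.finrank F W.toSubmodule ≤ Module.finrank F L :=
        Submodule.finrank_le _
      have h4 : Module.finrank F V.toSubmodule ≤ Module.finrank F L :=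
        Submodule.finrank_le _
      omega
    -- J is not contained in V
    have hJV : ¬ J.toSubmodule ≤ V.toSubmodule := by
      intro h
      have hmod : (J.toSubmodule ⊔ M.toSubmodule) ⊓ U.toSubmodule =
          J.toSubmodule ⊔ (M.toSubmodule ⊓ U.toSubmodule) :=
        sup_inf_assoc_of_le _ hJU
      have hU_eq : U.toSubmodule = J.toSubmodule ⊔ (M.toSubmodule ⊓ U.toSubmodule) := by
        rw [← hmod, hJMtop, top_inf_eq]
      have : U.toSubmodule ≤ V.toSubmodule := by
        rw [hU_eq]
        exact sup_le h (le_trans (le_of_eq (inf_comm _ _)) hV0)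
      exact absurd (lt_of_lt_of_le hVU this) (lt_irrefl _)
    obtain ⟨z', hz'J, hz'V⟩ := SetLike.not_le_iff_exists.mp hJV
    -- W := J + V equals U
    have hWle : (idealSupSubalg J V).toSubmodule ≤ U.toSubmodule := by
      rw [idealSupSubalg_toSubmodule]; exact sup_le hJU (le_of_lt hVU)
    have hWlt : V.toSubmodule < (idealSupSubalg J V).toSubmodule := by
      rw [idealSupSubalg_toSubmodule]
      exact lt_of_le_of_ne le_sup_right
        (fun he => hz'V (he ▸ Submodule.mem_sup_left hz'J))
    have hWU : (idealSupSubalg J V).toSubmodule = U.toSubmodule := hVmax' _ hWlt hWle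
    -- contradiction with minimality of U
    have hφV : (frattini F L).toSubmodule ≤ V.toSubmodule :=
      le_trans (le_inf hφU (frattini_le_coatom hM)) hV0
    have hBV : B.toSubmodule ⊔ V.toSubmodule = ⊤ := by
      have : B.toSubmodule ⊔ (J.toSubmodule ⊔ V.toSubmodule) = ⊤ := by
        rw [← idealSupSubalg_toSubmodule, hWU]; exact hsup
      rwa [← sup_assoc, sup_eq_left.mpr hJB] at this
    have h1 := hUmin V ⟨hφV, hBV⟩
    have h2 : Module.finrank F V.toSubmodule < Module.finrank F U.toSubmodule :=
      Submodule.finrank_lt_finrank_of_lt hVU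
    omega
  have hJφ : J.toSubmodule ≤ (frattini F L).toSubmodule := ideal_le_ideal' (le_frattini hJM)
  exact ⟨U, hφU, hsup, le_antisymm hJφ hφJ⟩

end Aux2
section Aux3

variable {F : Type*} [Field F] {L : Type*} [LieRing L] [LieAlgebra F L]
variable [FiniteDimensional F L]

lemma exists_minimal_over {B : LieIdeal F L} (hle : frattini F L ≤ B)
    (hne : frattini F L ≠ B) :
    ∃ A : LieIdeal F L, IsMinModIdeal (frattini F L) A ∧ A ≤ B := by
  obtain ⟨A, ⟨hlt, hAB⟩, hmin⟩ := exists_min_nat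
    (fun A : LieIdeal F L => Module.finrank F A.toSubmodule)
    (p := fun A : LieIdeal F L => frattini F L < A ∧ A ≤ B)
    ⟨B, lt_of_le_of_ne hle hne, le_rfl⟩
  refine ⟨A, ⟨hlt, fun B' h1 h2 => ?_⟩, hAB⟩
  by_cases hB' : B' = frattini F L
  · exact Or.inl hB'
  · refine Or.inr ?_
    have h3 := hmin B' ⟨lt_of_le_of_ne h1 (Ne.symm hB'), le_trans h2 hAB⟩
    have h4 : A.toSubmodule = B'.toSubmodule :=
      (Submodule.eq_of_le_of_finrank_le (ideal_le_ideal' h2) h3).symm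
    exact (LieSubmodule.toSubmodule_inj _ _).mp h4.symm

/-- Key lemma: an ideal containing `φ` which is abelian mod `φ` is contained in `Ñ`. -/
lemma abelian_ideal_le_Ntilde {B : LieIdeal F L} (hle : frattini F L ≤ B)
    (hBB : ∀ x ∈ B, ∀ y ∈ B, ⁅x, y⁆ ∈ frattini F L) : B ≤ Ntilde F L := by
  generalize hn : Module.finrank F B.toSubmodule = n
  induction n using Nat.strong_induction_on generalizing B with
  | _ n ih =>
  by_cases htriv : B ≤ frattini F L
  · exact le_trans htriv frattini_le_Ntilde
  · have hne : frattini F L ≠ B := fun h => htriv (le_of_eq h.symm)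
    obtain ⟨A, hAmin, hAB⟩ := exists_minimal_over hle hne
    have hAN : A ≤ Ntilde F L := minmod_le_Ntilde hAmin
    have hφA : frattini F L ≤ A := le_of_lt hAmin.1
    have hAA : ∀ x ∈ A, ∀ y ∈ A, ⁅x, y⁆ ∈ frattini F L :=
      fun x hx y hy => hBB x (hAB hx) y (hAB hy)
    obtain ⟨U, hφU, hsup, hinf⟩ := complement_lemma (ideal_le_ideal' hφA) hAA
    have hdecomp : ∀ x : L, ∃ a ∈ A.toSubmodule, ∃ u ∈ U.toSubmodule, a + u = x := by
      intro x
      have hx : x ∈ A.toSubmodule ⊔ U.toSubmodule := by rw [hsup]; exact Submodule.mem_top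
      obtain ⟨a, ha, u, hu, h⟩ := Submodule.mem_sup.mp hx
      exact ⟨a, ha, u, hu, h⟩
    -- C := B ∩ U is an ideal of L
    set Csub : Submodule F L := B.toSubmodule ⊓ U.toSubmodule with hCsub
    have hφC : (frattini F L).toSubmodule ≤ Csub := le_inf (ideal_le_ideal' hle) hφU
    have hClie : ∀ (x : L), ∀ m ∈ Csub, ⁅x, m⁆ ∈ Csub := by
      intro x m hm
      obtain ⟨a, ha, u, hu, rfl⟩ := hdecomp x
      rw [add_lie]
      refine Submodule.add_mem _ (hφC (hBB a (hAB ha) m hm.1)) ?_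
      exact ⟨B.lie_mem hm.1, U.lie_mem hu hm.2⟩
    set C : LieIdeal F L := { Csub with lie_mem := fun {x m} hm => hClie x m hm } with hC
    have hBAC : B.toSubmodule = A.toSubmodule ⊔ C.toSubmodule := by
      have hAB' : A.toSubmodule ≤ B.toSubmodule := hAB
      have hmod : (A.toSubmodule ⊔ U.toSubmodule) ⊓ B.toSubmodule =
          A.toSubmodule ⊔ (U.toSubmodule ⊓ B.toSubmodule) :=
        sup_inf_assoc_of_le U.toSubmodule hAB'
      rw [hsup, top_inf_eq] at hmod
      rw [hmod, inf_comm]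
    have hCB : C.toSubmodule ≤ B.toSubmodule := inf_le_left
    have hCne : C.toSubmodule ≠ B.toSubmodule := by
      intro h
      have hBU : B.toSubmodule ≤ U.toSubmodule := h ▸ inf_le_right
      have hAφ : A.toSubmodule ≤ (frattini F L).toSubmodule := by
        rw [← hinf]
        exact le_inf le_rfl (le_trans (ideal_le_ideal' hAB) hBU)
      exact absurd (lt_of_lt_of_le hAmin.1 (ideal_le_ideal hAφ)) (lt_irrefl _)
    have hrank : Module.finrank F C.toSubmodule < n :=
      hn ▸ Submodule.finrank_lt_finrank_of_lt (lt_of_le_of_ne hCB hCne)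
    have hCN : C ≤ Ntilde F L := by
      refine ih _ hrank (B := C) (ideal_le_ideal hφC) ?_ rfl
      intro x hx y hy
      exact hBB x (hCB hx) y (hCB hy)
    refine ideal_le_ideal ?_
    rw [hBAC]
    exact sup_le (ideal_le_ideal' hAN) (ideal_le_ideal' hCN)

end Aux3
section Aux4

variable {F : Type*} [Field F] {L : Type*} [LieRing L] [LieAlgebra F L]
variable [FiniteDimensional F L]

/-- If `I` is a nilpotent ideal then `[I,I]` lies in every maximal subalgebra,
hence in the Frattini ideal. -/
lemma comm_le_coatom {I : LieIdeal F L} {n : ℕ} (hnil : idlcs I n = ⊥)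
    {M : LieSubalgebra F L} (hM : IsCoatom M) :
    ∀ x ∈ I, ∀ y ∈ I, ⁅x, y⁆ ∈ M.toSubmodule := by
  by_cases hIM : I.toSubmodule ≤ M.toSubmodule
  · exact fun x hx y hy => hIM (I.lie_mem hy)
  -- J := I ∩ M
  set Jsub : Submodule F L := I.toSubmodule ⊓ M.toSubmodule with hJsub
  -- minimal k with idlcs I k ≤ J
  obtain ⟨k, hk, hkmin⟩ := exists_min_nat (fun k : ℕ => k)
    (p := fun k : ℕ => (idlcs I k).toSubmodule ≤ Jsub)
    ⟨n, by show (idlcs I n).toSubmodule ≤ Jsub; rw [hnil]; exact bot_le⟩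
  have hk0 : k ≠ 0 := by
    intro h
    rw [h] at hk
    exact hIM (le_trans hk inf_le_right)
  obtain ⟨k', rfl⟩ := Nat.exists_eq_succ_of_ne_zero hk0
  have hknot : ¬ (idlcs I k').toSubmodule ≤ Jsub := by
    intro h
    have := hkmin k' h
    omega
  obtain ⟨z, hzP, hzJ⟩ := SetLike.not_le_iff_exists.mp hknot
  have hzI : z ∈ I := idlcs_le_self I k' hzP
  have hzM : z ∉ M.toSubmodule := fun h => hzJ ⟨hzI, h⟩
  -- elements of idlcs I k' normalize J
  have hPnorm : ∀ w ∈ idlcs I k', ∀ y ∈ I, ⁅w, y⁆ ∈ Jsub := by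
    intro w hw y hy
    have h1 : ⁅y, w⁆ ∈ idlcs I (k' + 1) := LieSubmodule.lie_mem_lie hy hw
    have h2 : ⁅w, y⁆ = -⁅y, w⁆ := by rw [← lie_skew]
    rw [h2]
    exact Submodule.neg_mem _ (hk h1)
  -- J is an ideal of L: its normalizer contains M and z, so is all of L
  have hJnorm : ∀ (x : L), ∀ j ∈ Jsub, ⁅x, j⁆ ∈ Jsub := by
    have hMn : M ≤ normSubalg Jsub := by
      intro m hm j hj
      exact ⟨I.lie_mem hj.1, M.lie_mem hm hj.2⟩
    have hzn : z ∈ normSubalg Jsub := fun j hj => hPnorm z hzP j hj.1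
    have hlt : M < normSubalg Jsub :=
      lt_of_le_of_ne hMn (fun he => hzM (by rw [he]; exact hzn))
    have htop := hM.2 _ hlt
    intro x j hj
    exact (htop ▸ (LieSubalgebra.mem_top x) : x ∈ normSubalg Jsub) j hj
  -- Z := {x ∈ I | [x, I] ⊆ J} is an ideal of L containing z, not contained in M
  set Zsub : Submodule F L :=
    { carrier := {x : L | x ∈ I.toSubmodule ∧ ∀ y ∈ I, ⁅x, y⁆ ∈ Jsub}
      zero_mem' := ⟨Submodule.zero_mem _, fun y _ => by rw [zero_lie]; exact Jsub.zero_mem⟩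
      add_mem' := fun ha hb => ⟨Submodule.add_mem _ ha.1 hb.1,
        fun y hy => by rw [add_lie]; exact Jsub.add_mem (ha.2 y hy) (hb.2 y hy)⟩
      smul_mem' := fun c x hx => ⟨Submodule.smul_mem _ c hx.1,
        fun y hy => by rw [smul_lie]; exact Jsub.smul_mem c (hx.2 y hy)⟩ } with hZsub
  have hZlie : ∀ (x : L), ∀ m ∈ Zsub, ⁅x, m⁆ ∈ Zsub := by
    intro x m hm
    refine ⟨I.lie_mem hm.1, fun y hy => ?_⟩
    have e : ⁅⁅x, m⁆, y⁆ = ⁅x, ⁅m, y⁆⁆ - ⁅m, ⁅x, y⁆⁆ := by rw [lie_lie]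
    rw [e]
    exact Jsub.sub_mem (hJnorm x _ (hm.2 y hy)) (hm.2 _ (I.lie_mem hy))
  set Z : LieIdeal F L := { Zsub with lie_mem := fun {x m} hm => hZlie x m hm } with hZ
  have hzZ : z ∈ Z := ⟨hzI, fun y hy => hPnorm z hzP y hy⟩
  -- M + Z = L, so I = Z by the modular law
  have hZM : Z.toSubmodule ⊔ M.toSubmodule = ⊤ := by
    have hlt : M < idealSupSubalg Z M := by
      refine lt_of_le_of_ne (fun w hw => Submodule.mem_sup_right hw) ?_
      intro he
      exact hzM (by rw [he]; exact mem_idealSupSubalg.mpr (Submodule.mem_sup_left hzZ))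
    have h1 := hM.2 _ hlt
    have h2 : (idealSupSubalg Z M).toSubmodule = (⊤ : LieSubalgebra F L).toSubmodule := by
      rw [h1]
    rwa [idealSupSubalg_toSubmodule] at h2
  have hZI : Z.toSubmodule ≤ I.toSubmodule := fun x hx => hx.1
  have hIZ : I.toSubmodule ≤ Zsub := by
    have hmod : (Z.toSubmodule ⊔ M.toSubmodule) ⊓ I.toSubmodule =
        Z.toSubmodule ⊔ (M.toSubmodule ⊓ I.toSubmodule) :=
      sup_inf_assoc_of_le M.toSubmodule hZI
    rw [hZM, top_inf_eq] at hmod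
    have hJZ : M.toSubmodule ⊓ I.toSubmodule ≤ Zsub := by
      intro j hj
      have hj' : j ∈ Jsub := ⟨hj.2, hj.1⟩
      refine ⟨hj.2, fun y hy => ?_⟩
      have : ⁅y, j⁆ ∈ Jsub := hJnorm y j hj'
      have e : ⁅j, y⁆ = -⁅y, j⁆ := by rw [← lie_skew]
      rw [e]; exact Jsub.neg_mem this
    calc I.toSubmodule = Z.toSubmodule ⊔ (M.toSubmodule ⊓ I.toSubmodule) := hmod
      _ ≤ Zsub := sup_le le_rfl hJZ
  intro x hx y hy
  exact ((hIZ hx).2 y hy).2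

lemma comm_nilpotent_le_frattini {I : LieIdeal F L} {n : ℕ} (hnil : idlcs I n = ⊥) :
    ⁅I, I⁆ ≤ frattini F L := by
  apply le_frattini
  intro M hM
  intro w hw
  have hw' : w ∈ (⁅I, I⁆ : LieIdeal F L).toSubmodule := hw
  rw [LieSubmodule.lieIdeal_oper_eq_linear_span'] at hw'
  refine Submodule.span_le.mpr ?_ hw'
  rintro _ ⟨x, hx, y, hy, rfl⟩
  exact comm_le_coatom hnil hM x hx y hy

end Aux4
section Aux5

variable {F : Type*} [Field F] {L : Type*} [LieRing L] [LieAlgebra F L]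
variable [FiniteDimensional F L]

lemma idlcs_le_map (I : LieIdeal F L) :
    ∀ k, (idlcs I k).toSubmodule ≤
      Submodule.map (I.incl : I →ₗ⁅F⁆ L).toLinearMap
        (LieModule.lowerCentralSeries F I I k).toSubmodule := by
  intro k
  induction k with
  | zero =>
    intro x hx
    exact ⟨⟨x, hx⟩, LieSubmodule.mem_top _, rfl⟩
  | succ k ih =>
    show ((⁅I, idlcs I k⁆ : LieIdeal F L)).toSubmodule ≤ _
    rw [LieSubmodule.lieIdeal_oper_eq_linear_span']
    refine Submodule.span_le.mpr ?_
    rintro _ ⟨x, hx, y, hy, rfl⟩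
    obtain ⟨yy, hyy, rfl⟩ := ih hy
    refine ⟨⁅(⟨x, hx⟩ : I), yy⁆, ?_, rfl⟩
    have : LieModule.lowerCentralSeries F I I (k + 1) =
        ⁅(⊤ : LieIdeal F I), LieModule.lowerCentralSeries F I I k⁆ :=
      LieModule.lowerCentralSeries_succ F I I k
    rw [this]
    exact LieSubmodule.lie_mem_lie (LieSubmodule.mem_top _) hyy

lemma exists_idlcs_bot {I : LieIdeal F L} (h : LieRing.IsNilpotent I) :
    ∃ n, idlcs I n = ⊥ := by
  obtain ⟨n, hn⟩ := (LieModule.isNilpotent_iff F I I).mp h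
  refine ⟨n, ?_⟩
  rw [eq_bot_iff]
  refine ideal_le_ideal ?_
  have h2 := idlcs_le_map I n
  rw [hn] at h2
  simpa using h2

lemma nilrad_le_Ntilde : nilrad F L ≤ Ntilde F L := by
  refine sSup_le ?_
  intro I hI
  obtain ⟨n, hn⟩ := exists_idlcs_bot hI
  have hII : ⁅I, I⁆ ≤ frattini F L := comm_nilpotent_le_frattini hn
  refine le_trans (le_sup_left : I ≤ I ⊔ frattini F L)
    (abelian_ideal_le_Ntilde le_sup_right ?_)
  intro x hx y hy
  have hx' : x ∈ I.toSubmodule ⊔ (frattini F L).toSubmodule := by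
    rw [← LieSubmodule.sup_toSubmodule]; exact hx
  have hy' : y ∈ I.toSubmodule ⊔ (frattini F L).toSubmodule := by
    rw [← LieSubmodule.sup_toSubmodule]; exact hy
  obtain ⟨i, hi, f, hf, rfl⟩ := Submodule.mem_sup.mp hx'
  obtain ⟨i', hi', f', hf', rfl⟩ := Submodule.mem_sup.mp hy'
  have e : ⁅i + f, i' + f'⁆ = ⁅i, i'⁆ + ⁅i, f'⁆ + (⁅f, i'⁆ + ⁅f, f'⁆) := by
    simp only [add_lie, lie_add]; abel
  rw [e]
  have h1 : ⁅i, i'⁆ ∈ frattini F L := hII (LieSubmodule.lie_mem_lie hi hi')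
  have h2 : ⁅i, f'⁆ ∈ frattini F L := (frattini F L).lie_mem hf'
  have h3 : ⁅f, i'⁆ ∈ frattini F L := by
    rw [← lie_skew]; exact neg_mem ((frattini F L).lie_mem hf)
  have h4 : ⁅f, f'⁆ ∈ frattini F L := (frattini F L).lie_mem hf'
  exact add_mem (add_mem h1 h2) (add_mem h3 h4)

end Aux5
section Aux6

variable {F : Type*} [Field F] {L : Type*} [LieRing L] [LieAlgebra F L]
variable [FiniteDimensional F L]

lemma sup_frattini_abelian {I : LieIdeal F L} (hII : ⁅I, I⁆ ≤ frattini F L) :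
    ∀ x ∈ I ⊔ frattini F L, ∀ y ∈ I ⊔ frattini F L, ⁅x, y⁆ ∈ frattini F L := by
  intro x hx y hy
  have hx' : x ∈ I.toSubmodule ⊔ (frattini F L).toSubmodule := by
    rw [← LieSubmodule.sup_toSubmodule]; exact hx
  have hy' : y ∈ I.toSubmodule ⊔ (frattini F L).toSubmodule := by
    rw [← LieSubmodule.sup_toSubmodule]; exact hy
  obtain ⟨i, hi, f, hf, rfl⟩ := Submodule.mem_sup.mp hx'
  obtain ⟨i', hi', f', hf', rfl⟩ := Submodule.mem_sup.mp hy'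
  have e : ⁅i + f, i' + f'⁆ = ⁅i, i'⁆ + ⁅i, f'⁆ + (⁅f, i'⁆ + ⁅f, f'⁆) := by
    simp only [add_lie, lie_add]; abel
  rw [e]
  have h1 : ⁅i, i'⁆ ∈ frattini F L := hII (LieSubmodule.lie_mem_lie hi hi')
  have h2 : ⁅i, f'⁆ ∈ frattini F L := (frattini F L).lie_mem hf'
  have h3 : ⁅f, i'⁆ ∈ frattini F L := by
    rw [← lie_skew]; exact neg_mem ((frattini F L).lie_mem hf)
  have h4 : ⁅f, f'⁆ ∈ frattini F L := (frattini F L).lie_mem hf'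
  exact add_mem (add_mem h1 h2) (add_mem h3 h4)

lemma step_lemma {T : LieIdeal F L} (hTC : T ≤ centralizer (Ntilde F L))
    (hTT : (⁅T, T⁆ : LieIdeal F L) ≤ Ntilde F L) : T ≤ Ntilde F L := by
  have h2 : idlcs T 2 = ⊥ := by
    rw [eq_bot_iff]
    show (⁅T, idlcs T 1⁆ : LieIdeal F L) ≤ ⊥
    refine (LieSubmodule.lie_le_iff _ _ _).mpr ?_
    intro x hx m hm
    have hm' : m ∈ (⁅T, T⁆ : LieIdeal F L) := hm
    have hx' : x ∈ centralizer (Ntilde F L) := hTC hx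
    have : ⁅x, m⁆ = 0 := hx' m (hTT hm')
    rw [this]; exact LieSubmodule.zero_mem _
  have hcomm : (⁅T, T⁆ : LieIdeal F L) ≤ frattini F L := comm_nilpotent_le_frattini h2
  exact le_trans (le_sup_left : T ≤ T ⊔ frattini F L)
    (abelian_ideal_le_Ntilde le_sup_right (sup_frattini_abelian hcomm))

lemma centralizer_le_Ntilde : centralizer (Ntilde F L) ≤ Ntilde F L := by
  set C : LieIdeal F L := centralizer (Ntilde F L) with hCdef
  -- find k with D (k+1) = D k
  have hstab : ∃ k, LieAlgebra.derivedSeriesOfIdeal F L (k + 1) C =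
      LieAlgebra.derivedSeriesOfIdeal F L k C := by
    by_contra h
    push_neg at h
    have hstrict : ∀ k,
        Module.finrank F (LieAlgebra.derivedSeriesOfIdeal F L (k + 1) C).toSubmodule <
        Module.finrank F (LieAlgebra.derivedSeriesOfIdeal F L k C).toSubmodule := by
      intro k
      refine Submodule.finrank_lt_finrank_of_lt (lt_of_le_of_ne
        (ideal_le_ideal' (LieAlgebra.derivedSeriesOfIdeal_succ_le C k)) ?_)
      intro he
      exact h k ((LieSubmodule.toSubmodule_inj _ _).mp he)
    have hdec : ∀ k,
        Module.finrank F (LieAlgebra.derivedSeriesOfIdeal F L k C).toSubmodule + k ≤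
        Module.finrank F (LieAlgebra.derivedSeriesOfIdeal F L 0 C).toSubmodule := by
      intro k
      induction k with
      | zero => simp
      | succ k ih => have := hstrict k; omega
    have h1 := hdec (Module.finrank F (LieAlgebra.derivedSeriesOfIdeal F L 0 C).toSubmodule + 1)
    omega
  obtain ⟨k, hk⟩ := hstab
  -- the stable term is inside the Frattini ideal
  have hPle : LieAlgebra.derivedSeriesOfIdeal F L k C ≤ frattini F L := by
    by_contra hPφ
    set P : LieIdeal F L := LieAlgebra.derivedSeriesOfIdeal F L k C with hP
    have hPP : (⁅P, P⁆ : LieIdeal F L) = P := by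
      rw [hP, ← LieAlgebra.derivedSeriesOfIdeal_succ, hk]
    have hPC : P ≤ C := LieAlgebra.derivedSeriesOfIdeal_le_self C k
    set B : LieIdeal F L := P ⊔ frattini F L with hB
    have hφB : frattini F L ≤ B := le_sup_right
    have hφneB : frattini F L ≠ B := by
      intro h
      exact hPφ (le_trans (le_sup_left : P ≤ B) (le_of_eq h.symm))
    obtain ⟨A, hAmin, hAB⟩ := exists_minimal_over hφB hφneB
    have hAN : A ≤ Ntilde F L := minmod_le_Ntilde hAmin
    have hφA : frattini F L ≤ A := le_of_lt hAmin.1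
    have hBdec : ∀ x ∈ B.toSubmodule,
        ∃ p ∈ P.toSubmodule, ∃ f ∈ (frattini F L).toSubmodule, p + f = x := by
      intro x hx
      have hx' : x ∈ P.toSubmodule ⊔ (frattini F L).toSubmodule := by
        rw [← LieSubmodule.sup_toSubmodule]; exact hx
      exact Submodule.mem_sup.mp hx'
    have hBA : ∀ x ∈ B.toSubmodule, ∀ a ∈ A, ⁅x, a⁆ ∈ frattini F L := by
      intro x hx a ha
      obtain ⟨p, hp, f, hf, rfl⟩ := hBdec x hx
      have hp' : p ∈ centralizer (Ntilde F L) := hPC hp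
      have hp0 : ⁅p, a⁆ = 0 := hp' a (hAN ha)
      rw [add_lie, hp0, zero_add, ← lie_skew]
      exact neg_mem ((frattini F L).lie_mem hf)
    have hAA : ∀ x ∈ A, ∀ y ∈ A, ⁅x, y⁆ ∈ frattini F L :=
      fun x hx y hy => hBA x (ideal_le_ideal' hAB hx) y hy
    obtain ⟨U, hφU, hsup, hinf⟩ := complement_lemma (ideal_le_ideal' hφA) hAA
    -- Q := B ∩ U is an ideal
    set Qsub : Submodule F L := B.toSubmodule ⊓ U.toSubmodule with hQsub
    have hφQ : (frattini F L).toSubmodule ≤ Qsub := le_inf (ideal_le_ideal' hφB) hφU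
    have hQlie : ∀ (x : L), ∀ m ∈ Qsub, ⁅x, m⁆ ∈ Qsub := by
      intro x m hm
      have hx : x ∈ A.toSubmodule ⊔ U.toSubmodule := by rw [hsup]; exact Submodule.mem_top
      obtain ⟨a, ha, u, hu, rfl⟩ := Submodule.mem_sup.mp hx
      rw [add_lie]
      refine Submodule.add_mem _ (hφQ ?_) ⟨B.lie_mem hm.1, U.lie_mem hu hm.2⟩
      rw [← lie_skew]
      exact neg_mem (hBA m hm.1 a ha)
    set Q : LieIdeal F L := { Qsub with lie_mem := fun {x m} hm => hQlie x m hm } with hQ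
    have hBAQ : B.toSubmodule = A.toSubmodule ⊔ Q.toSubmodule := by
      have hAB' : A.toSubmodule ≤ B.toSubmodule := ideal_le_ideal' hAB
      have hmod : (A.toSubmodule ⊔ U.toSubmodule) ⊓ B.toSubmodule =
          A.toSubmodule ⊔ (U.toSubmodule ⊓ B.toSubmodule) :=
        sup_inf_assoc_of_le U.toSubmodule hAB'
      rw [hsup, top_inf_eq] at hmod
      rw [hmod, inf_comm]
    have hPQ : (⁅P, P⁆ : LieIdeal F L) ≤ Q := by
      refine (LieSubmodule.lie_le_iff _ _ _).mpr ?_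
      intro x hx m hm
      have hx' : x ∈ A.toSubmodule ⊔ Q.toSubmodule := by
        rw [← hBAQ]; exact le_sup_left (α := Submodule F L) (a := P.toSubmodule) hx
      have hm' : m ∈ A.toSubmodule ⊔ Q.toSubmodule := by
        rw [← hBAQ]; exact le_sup_left (α := Submodule F L) (a := P.toSubmodule) hm
      obtain ⟨a, ha, q, hq, rfl⟩ := Submodule.mem_sup.mp hx'
      obtain ⟨a', ha', q', hq', rfl⟩ := Submodule.mem_sup.mp hm'
      have e : ⁅a + q, a' + q'⁆ = ⁅a, a'⁆ + ⁅a, q'⁆ + (⁅q, a'⁆ + ⁅q, q'⁆) := by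
        simp only [add_lie, lie_add]; abel
      have hmem : ∀ w ∈ Qsub, ⁅a, w⁆ ∈ Qsub := by
        intro w hw
        refine hφQ ?_
        rw [← lie_skew]
        exact neg_mem (hBA w hw.1 a ha)
      show ⁅a + q, a' + q'⁆ ∈ Qsub
      rw [e]
      refine Submodule.add_mem _ (Submodule.add_mem _ (hφQ (hAA a ha a' ha')) ?_)
        (Submodule.add_mem _ (hφQ (hBA q hq.1 a' ha')) (hQlie q q' hq'))
      exact hmem q' hq'
    have hPU : P.toSubmodule ≤ Qsub := by
      have : P.toSubmodule ≤ Q.toSubmodule := by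
        rw [← hPP]
        exact ideal_le_ideal' hPQ
      exact this
    have hBU : B.toSubmodule ≤ U.toSubmodule := by
      have hBPf : B.toSubmodule = P.toSubmodule ⊔ (frattini F L).toSubmodule := rfl
      rw [hBPf]
      exact sup_le (le_trans hPU inf_le_right) hφU
    have hAφ : A.toSubmodule ≤ (frattini F L).toSubmodule := by
      rw [← hinf]
      exact le_inf le_rfl (le_trans (ideal_le_ideal' hAB) hBU)
    exact absurd (lt_of_lt_of_le hAmin.1 (ideal_le_ideal hAφ)) (lt_irrefl _)
  -- downward induction along the derived series
  have hdown : ∀ m, LieAlgebra.derivedSeriesOfIdeal F L (k - m) C ≤ Ntilde F L := by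
    intro m
    induction m with
    | zero =>
      simpa using le_trans hPle frattini_le_Ntilde
    | succ m ih =>
      rcases le_or_gt (m + 1) k with hmk | hmk
      · refine step_lemma (le_trans (LieAlgebra.derivedSeriesOfIdeal_le_self C _) le_rfl) ?_
        have he : k - (m + 1) + 1 = k - m := by omega
        have hcomm : (⁅LieAlgebra.derivedSeriesOfIdeal F L (k - (m + 1)) C,
            LieAlgebra.derivedSeriesOfIdeal F L (k - (m + 1)) C⁆ : LieIdeal F L) =
            LieAlgebra.derivedSeriesOfIdeal F L (k - m) C := by
          rw [← LieAlgebra.derivedSeriesOfIdeal_succ, he]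
        rw [hcomm]
        exact ih
      · have he : k - (m + 1) = k - m := by omega
        rw [he]
        exact ih
  have h0 := hdown k
  rw [Nat.sub_self, LieAlgebra.derivedSeriesOfIdeal_zero] at h0
  exact h0

lemma centralizer_le_nilrad : centralizer (Ntilde F L) ≤ nilrad F L := by
  have hCN : centralizer (Ntilde F L) ≤ Ntilde F L := centralizer_le_Ntilde
  have hCab : ∀ x ∈ centralizer (Ntilde F L), ∀ y ∈ centralizer (Ntilde F L), ⁅x, y⁆ = 0 :=
    fun x hx y hy => hx y (hCN hy)
  haveI habel : IsLieAbelian (centralizer (Ntilde F L) : LieIdeal F L) :=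
    ⟨fun a b => Subtype.ext (hCab a a.2 b b.2)⟩
  have hnil : LieRing.IsNilpotent (centralizer (Ntilde F L) : LieIdeal F L) :=
    inferInstance
  exact le_sSup (s := {I : LieIdeal F L | LieRing.IsNilpotent I}) hnil

end Aux6

/-- `C_L(Ñ(L)) ⊆ Z(N) ⊆ Ñ(L)`. -/
theorem stmt_17 (F : Type*) [Field F] (L : Type*) [LieRing L] [LieAlgebra F L]
    [FiniteDimensional F L] :
    centralizer (Ntilde F L) ≤ idealCenter (nilrad F L) ∧
      idealCenter (nilrad F L) ≤ Ntilde F L := by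
  constructor
  · intro x hx
    exact ⟨centralizer_le_nilrad hx, fun y hy => hx y (nilrad_le_Ntilde hy)⟩
  · intro x hx
    exact nilrad_le_Ntilde hx.1

end Paper
end
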